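/- arXiv:1912.00115 — 9 statements merged into one kernel-verified Lean document; each statement's English description precedes it below -/
import Mathlib

section
/- The group presented by ⟨x, y | xyx = yxy, x² = y³⟩ is the trivial group. -/
/-- The Akbulut–Kirby presentation ⟨x, y | xyx = yxy, x² = y³⟩ presents the trivial group. -/
theorem stmt_0 :
    Subsingleton (PresentedGroup
      ({FreeGroup.of true * FreeGroup.of false * FreeGroup.of true *
          (FreeGroup.of false * FreeGroup.of true * FreeGroup.of false)⁻¹,
        FreeGroup.of true ^ 2 * (FreeGroup.of false ^ 3)⁻¹} :
        Set (FreeGroup Bool))) := by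
  set rels : Set (FreeGroup Bool) :=
      ({FreeGroup.of true * FreeGroup.of false * FreeGroup.of true *
          (FreeGroup.of false * FreeGroup.of true * FreeGroup.of false)⁻¹,
        FreeGroup.of true ^ 2 * (FreeGroup.of false ^ 3)⁻¹} :
        Set (FreeGroup Bool)) with hrels
  set G := PresentedGroup rels
  set a : G := PresentedGroup.of true with ha'
  set b : G := PresentedGroup.of false with hb'
  have key : ∀ r ∈ rels, (QuotientGroup.mk r : G) = 1 := by
    intro r hr
    exact (QuotientGroup.eq_one_iff r).2 (Subgroup.subset_normalClosure hr)
  have h1 : a * b * a = b * a * b := by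
    have := key _ (Or.inl rfl)
    have h : (QuotientGroup.mk (FreeGroup.of true * FreeGroup.of false * FreeGroup.of true *
        (FreeGroup.of false * FreeGroup.of true * FreeGroup.of false)⁻¹) : G)
        = a * b * a * (b * a * b)⁻¹ := rfl
    rw [h] at this
    exact mul_inv_eq_one.mp this
  have h2 : a ^ 2 = b ^ 3 := by
    have := key _ (Or.inr rfl)
    have h : (QuotientGroup.mk (FreeGroup.of true ^ 2 * (FreeGroup.of false ^ 3)⁻¹) : G)
        = a ^ 2 * (b ^ 3)⁻¹ := rfl
    rw [h] at this
    exact mul_inv_eq_one.mp this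
  have hcomm : a ^ 2 * b = b * a ^ 2 := by rw [h2]; group
  have hab : a ^ 2 = b ^ 2 := by
    have e1 : a * (a * b * a) = a * (b * a * b) := by rw [h1]
    have e2 : b * a ^ 3 = b * (a * b ^ 2) := by
      calc b * a ^ 3 = (a ^ 2 * b) * a := by rw [hcomm]; simp [pow_succ, pow_zero, mul_assoc]
        _ = a * (a * b * a) := by simp [pow_succ, pow_zero, mul_assoc]
        _ = a * (b * a * b) := e1
        _ = (a * b * a) * b := by simp [mul_assoc]
        _ = (b * a * b) * b := by rw [h1]
        _ = b * (a * b ^ 2) := by simp [pow_succ, pow_zero, mul_assoc]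
    have e3 : a ^ 3 = a * b ^ 2 := mul_left_cancel e2
    have : a * a ^ 2 = a * b ^ 2 := by rw [← e3]; group
    exact mul_left_cancel this
  have hb1 : b = 1 := by
    have hb32 : b ^ 3 = b ^ 2 := h2.symm.trans hab
    have : b ^ 2 * b = b ^ 2 * 1 := by
      rw [mul_one, ← pow_succ, hb32]
    exact mul_left_cancel this
  have ha1 : a = 1 := by
    have : a * a = a * 1 := by
      have := h1
      rw [hb1] at this
      simpa using this.symm
    exact mul_left_cancel this
  have hall : ∀ g : G, g = 1 := by
    intro g
    obtain ⟨w, rfl⟩ := QuotientGroup.mk_surjective g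
    induction w using FreeGroup.induction_on with
    | C1 => rfl
    | of x =>
      cases x
      · exact hb1
      · exact ha1
    | inv_of x ih =>
      rw [QuotientGroup.mk_inv, ih]; exact inv_one
    | mul x y ihx ihy =>
      rw [QuotientGroup.mk_mul, ihx, ihy]; exact one_mul _
  exact ⟨fun x y => by rw [hall x, hall y]⟩
end

section
/- The group presented by ⟨x, y | x⁻¹y³x = y⁴, x = y⁻¹xyx⁻¹⟩ is the trivial group. -/
namespace MS3

abbrev rels : Set (FreeGroup Bool) :=
  {(FreeGroup.of true)⁻¹ * FreeGroup.of false ^ 3 * FreeGroup.of true *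
      (FreeGroup.of false ^ 4)⁻¹,
    FreeGroup.of true *
      ((FreeGroup.of false)⁻¹ * FreeGroup.of true * FreeGroup.of false *
        (FreeGroup.of true)⁻¹)⁻¹}

local notation "G" => PresentedGroup rels

noncomputable def x : G := PresentedGroup.of true
noncomputable def y : G := PresentedGroup.of false

lemma rel_one {r : FreeGroup Bool} (h : r ∈ rels) : PresentedGroup.mk rels r = 1 := by
  have : PresentedGroup.mk rels r = QuotientGroup.mk r := rfl
  rw [this]; apply (QuotientGroup.eq_one_iff _).mpr
  exact Subgroup.subset_normalClosure h

lemma h1 : x⁻¹ * y ^ 3 * x * (y ^ 4)⁻¹ = 1 := by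
  have := rel_one (Set.mem_insert _ _)
  simpa [x, y, PresentedGroup.of] using this

lemma h2 : x * (y⁻¹ * x * y * x⁻¹)⁻¹ = 1 := by
  have := rel_one (Set.mem_insert_of_mem _ rfl)
  simpa [x, y, PresentedGroup.of] using this

lemma hc : y⁻¹ * x * y = x ^ 2 := by
  have h2' : x = y⁻¹ * x * y * x⁻¹ := by
    have h := h2; rwa [mul_inv_eq_one] at h
  calc y⁻¹ * x * y = (y⁻¹ * x * y * x⁻¹) * x := by group
    _ = x * x := by rw [← h2']
    _ = x ^ 2 := by rw [pow_two]

lemma conj' (a b : G) (n : ℕ) : a⁻¹ * b ^ n * a = (a⁻¹ * b * a) ^ n := by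
  have := conj_pow (i := n) (a := a⁻¹) (b := b)
  simpa using this.symm

lemma c2 : (y ^ 2)⁻¹ * x * y ^ 2 = x ^ 4 := by
  have e : (y ^ 2)⁻¹ * x * y ^ 2 = y⁻¹ * (y⁻¹ * x * y) * y := by
    simp [pow_succ, mul_inv_rev, mul_assoc]
  rw [e, hc, conj', hc, ← pow_mul]

lemma c3 : (y ^ 3)⁻¹ * x * y ^ 3 = x ^ 8 := by
  have e : (y ^ 3)⁻¹ * x * y ^ 3 = y⁻¹ * ((y ^ 2)⁻¹ * x * y ^ 2) * y := by
    simp [pow_succ, mul_inv_rev, mul_assoc]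
  rw [e, c2, conj', hc, ← pow_mul]

lemma c4 : (y ^ 4)⁻¹ * x * y ^ 4 = x ^ 16 := by
  have e : (y ^ 4)⁻¹ * x * y ^ 4 = y⁻¹ * ((y ^ 3)⁻¹ * x * y ^ 3) * y := by
    simp [pow_succ, mul_inv_rev, mul_assoc]
  rw [e, c3, conj', hc, ← pow_mul]

lemma hy4 : y ^ 4 = x⁻¹ * y ^ 3 * x := by
  have h := h1
  rw [mul_inv_eq_one] at h
  exact h.symm

lemma x8 : x ^ 8 = 1 := by
  have h16 : x ^ 16 = x ^ 8 := by
    calc x ^ 16 = (y ^ 4)⁻¹ * x * y ^ 4 := c4.symm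
      _ = (x⁻¹ * y ^ 3 * x)⁻¹ * x * (x⁻¹ * y ^ 3 * x) := by rw [hy4]
      _ = x⁻¹ * ((y ^ 3)⁻¹ * x * y ^ 3) * x := by group
      _ = x⁻¹ * x ^ 8 * x := by rw [c3]
      _ = x ^ 8 := by group
  have h' : x ^ 8 * x ^ 8 = x ^ 8 * 1 := by
    rw [mul_one, ← pow_add] at *
    exact h16
  exact mul_left_cancel h'

lemma hx : x = 1 := by
  have := c3
  rw [x8] at this
  have hx' : x = y ^ 3 * 1 * (y ^ 3)⁻¹ := by rw [← this]; group
  simpa using hx'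

lemma hy : y = 1 := by
  have := h1
  rw [hx] at this
  have : y⁻¹ = 1 := by
    calc y⁻¹ = 1⁻¹ * y ^ 3 * 1 * (y ^ 4)⁻¹ := by group
      _ = 1 := this
  simpa using inv_eq_one.mp this

lemma all_one : ∀ g : G, g = 1 := by
  intro g
  obtain ⟨f, rfl⟩ := PresentedGroup.mk_surjective rels g
  induction f using FreeGroup.induction_on with
  | C1 => exact map_one _
  | of b =>
      cases b
      · exact hy
      · exact hx
  | inv_of b ih => rw [map_inv, ih, inv_one]
  | mul a b iha ihb => rw [map_mul, iha, ihb, mul_one]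

lemma main : Subsingleton G :=
  ⟨fun a b => (all_one a).trans (all_one b).symm⟩

end MS3

/-- The Miller–Schupp presentation ⟨x, y | x⁻¹y³x = y⁴, x = y⁻¹xyx⁻¹⟩ presents the
trivial group. -/
theorem stmt_1 :
    Subsingleton (PresentedGroup
      ({(FreeGroup.of true)⁻¹ * FreeGroup.of false ^ 3 * FreeGroup.of true *
          (FreeGroup.of false ^ 4)⁻¹,
        FreeGroup.of true *
          ((FreeGroup.of false)⁻¹ * FreeGroup.of true * FreeGroup.of false *
            (FreeGroup.of true)⁻¹)⁻¹} :
        Set (FreeGroup Bool))) := by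
  exact MS3.main
end

section
/- For every natural number q ≥ 1, the group presented by ⟨x, y | x = [x⁻¹, y⁻¹], y = [y⁻¹, x^(−q)]⟩ is the trivial group, where [a,b] = aba⁻¹b⁻¹. -/
open scoped commutatorElement

/-- For every q ≥ 1, Gordon's presentation ⟨x, y | x = [x⁻¹, y⁻¹], y = [y⁻¹, x⁻ᑫ]⟩
presents the trivial group, where [a, b] = aba⁻¹b⁻¹. -/
theorem stmt_2 (q : ℕ) (hq : 1 ≤ q) :
    Subsingleton (PresentedGroup
      ({FreeGroup.of true * ⁅(FreeGroup.of true)⁻¹, (FreeGroup.of false)⁻¹⁆⁻¹,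
        FreeGroup.of false *
          ⁅(FreeGroup.of false)⁻¹, FreeGroup.of true ^ (-(q : ℤ))⁆⁻¹} :
        Set (FreeGroup Bool))) := by
  set rels : Set (FreeGroup Bool) :=
    ({FreeGroup.of true * ⁅(FreeGroup.of true)⁻¹, (FreeGroup.of false)⁻¹⁆⁻¹,
      FreeGroup.of false *
        ⁅(FreeGroup.of false)⁻¹, FreeGroup.of true ^ (-(q : ℤ))⁆⁻¹} :
      Set (FreeGroup Bool)) with hrels
  let π : FreeGroup Bool →* PresentedGroup rels :=
    QuotientGroup.mk' (Subgroup.normalClosure rels)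
  have hπ1 : ∀ r ∈ rels, π r = 1 := fun r hr => by
    exact (QuotientGroup.eq_one_iff r).mpr (Subgroup.subset_normalClosure hr)
  set a : PresentedGroup rels := π (FreeGroup.of true) with ha
  set b : PresentedGroup rels := π (FreeGroup.of false) with hb
  set n : ℤ := (q : ℤ) with hn
  have h1 : a = a⁻¹ * b⁻¹ * a * b := by
    have := hπ1 _ (Set.mem_insert _ _)
    rw [commutatorElement_def] at this
    simp only [map_mul, map_inv, ← ha, ← hb, inv_inv] at this
    have h' : a * (a⁻¹ * b⁻¹ * a * b)⁻¹ = 1 := by group; group at this; exact this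
    calc a = a * (a⁻¹ * b⁻¹ * a * b)⁻¹ * (a⁻¹ * b⁻¹ * a * b) := by group
    _ = a⁻¹ * b⁻¹ * a * b := by rw [h']; group
  have h2 : b = b⁻¹ * a ^ (-n) * b * a ^ n := by
    have := hπ1 _ (Set.mem_insert_of_mem _ rfl)
    rw [commutatorElement_def] at this
    simp only [map_mul, map_inv, map_zpow, ← ha, ← hb, inv_inv, zpow_neg] at this
    have h' : b * (b⁻¹ * (a ^ n)⁻¹ * b * a ^ n)⁻¹ = 1 := by group; group at this; exact this
    calc b = b * (b⁻¹ * (a ^ n)⁻¹ * b * a ^ n)⁻¹ * (b⁻¹ * (a ^ n)⁻¹ * b * a ^ n) := by group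
    _ = b⁻¹ * a ^ (-n) * b * a ^ n := by rw [h']; group
  have k1 : b⁻¹ * a * b = a ^ (2 : ℤ) := by
    calc b⁻¹ * a * b = a * (a⁻¹ * b⁻¹ * a * b) := by group
    _ = a * a := by rw [← h1]
    _ = a ^ (2 : ℤ) := (zpow_two a).symm
  have k1' : ∀ m : ℤ, a ^ m * b = b * a ^ (2 * m) := by
    intro m
    have hc : b⁻¹ * a ^ m * b = (b⁻¹ * a * b) ^ m := by
      have := map_zpow (MulAut.conj b⁻¹) a m
      simp only [MulAut.conj_apply, inv_inv] at this
      rw [this]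
    rw [k1, ← zpow_mul] at hc
    calc a ^ m * b = b * (b⁻¹ * a ^ m * b) := by group
    _ = b * a ^ (2 * m) := by rw [hc]
  -- b * b = a^(-n) * b * a^n from h2, hence a^n * b * b = b * a^n
  have hB : a ^ n * (b * b) = b * a ^ n := by
    calc a ^ n * (b * b) = a ^ n * (b * (b⁻¹ * a ^ (-n) * b * a ^ n)) := by rw [← h2]
    _ = b * a ^ n := by group
  have hB2 : a ^ n * (b * b) = b * b * a ^ (4 * n) := by
    calc a ^ n * (b * b) = (a ^ n * b) * b := by group
    _ = b * (a ^ (2 * n) * b) := by rw [k1' n]; group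
    _ = b * (b * a ^ (2 * (2 * n))) := by rw [k1' (2 * n)]
    _ = b * b * a ^ (4 * n) := by ring_nf; group
  have hbval : b = a ^ (-3 * n) := by
    have h3 : b * b * a ^ (4 * n) = b * a ^ n := by rw [← hB2, hB]
    have h4 : b * a ^ (4 * n) = a ^ n := mul_left_cancel (by rw [← mul_assoc, h3])
    calc b = (a ^ n) * (a ^ (4 * n))⁻¹ := by rw [← h4]; group
    _ = a ^ (-3 * n) := by rw [← zpow_neg, ← zpow_add]; ring_nf
  have hcomm : Commute a b := by rw [hbval]; exact (Commute.refl a).zpow_right _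
  have ha1 : a = 1 := by
    have hx : b⁻¹ * a * b = a := by
      rw [mul_assoc, hcomm.eq]; group
    have h5 : a * a = a * 1 := by rw [mul_one, ← zpow_two, ← k1, hx]
    exact mul_left_cancel h5
  have hb1 : b = 1 := by rw [hbval, ha1]; simp
  constructor
  intro g h
  have key : ∀ w : FreeGroup Bool, π w = 1 := by
    intro w
    induction w using FreeGroup.induction_on with
    | C1 => simp
    | of x =>
        cases x with
        | false => exact hb1
        | true => exact ha1
    | inv_of x ih => rw [map_inv, ih]; simp
    | mul x y ihx ihy => rw [map_mul, ihx, ihy, mul_one]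
  obtain ⟨wg, rfl⟩ := QuotientGroup.mk'_surjective (Subgroup.normalClosure rels) g
  obtain ⟨wh, rfl⟩ := QuotientGroup.mk'_surjective (Subgroup.normalClosure rels) h
  exact (key wg).trans (key wh).symm
end

section
/- For every natural number n ≥ 1 and every word w in the free group F(x,y) with exponent sum 0 on x, the group presented by ⟨x, y | x⁻¹yⁿx = y^(n+1), x = w⟩ is the trivial group. -/
namespace MSAux

/-- count of x-letters -/
def cntP : List (Bool × Bool) → ℕ
  | [] => 0
  | p :: T => (if p = (true, true) then 1 else 0) + cntP T

/-- count of x⁻¹-letters -/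
def cntM : List (Bool × Bool) → ℕ
  | [] => 0
  | p :: T => (if p = (true, false) then 1 else 0) + cntM T

variable {G : Type*} [Group G]

/-- evaluation of a list of letters -/
def evalL (X Y : G) (L : List (Bool × Bool)) : G :=
  (L.map fun p => cond p.2 (cond p.1 X Y) (cond p.1 X Y)⁻¹).prod

lemma evalL_cons (X Y : G) (p : Bool × Bool) (L : List (Bool × Bool)) :
    evalL X Y (p :: L) = (cond p.2 (cond p.1 X Y) (cond p.1 X Y)⁻¹) * evalL X Y L := by
  simp [evalL]

lemma rearr (h E A : G) : (h * E)⁻¹ * A * (h * E) = E⁻¹ * (h⁻¹ * A * h) * E := by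
  group

lemma cntP_cons_xx (T : List (Bool × Bool)) : cntP ((true, true) :: T) = cntP T + 1 := by
  simp [cntP]; omega

lemma cntP_cons_xi (T : List (Bool × Bool)) : cntP ((true, false) :: T) = cntP T := by
  simp [cntP]

lemma cntP_cons_y (s : Bool) (T : List (Bool × Bool)) : cntP ((false, s) :: T) = cntP T := by
  simp [cntP]

lemma cntM_cons_xx (T : List (Bool × Bool)) : cntM ((true, true) :: T) = cntM T := by
  simp [cntM]

lemma cntM_cons_xi (T : List (Bool × Bool)) : cntM ((true, false) :: T) = cntM T + 1 := by
  simp [cntM]; omega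

lemma cntM_cons_y (s : Bool) (T : List (Bool × Bool)) : cntM ((false, s) :: T) = cntM T := by
  simp [cntM]

lemma pass (n : ℕ) (X Y : G)
    (hP : ∀ k : ℤ, X⁻¹ * Y ^ ((n : ℤ) * k) * X = Y ^ (((n : ℤ) + 1) * k))
    (hM : ∀ k : ℤ, X * Y ^ (((n : ℤ) + 1) * k) * X⁻¹ = Y ^ ((n : ℤ) * k)) :
    ∀ (L : List (Bool × Bool)) (a b : ℕ),
      (evalL X Y L)⁻¹ *
          Y ^ ((n : ℤ) ^ (cntP L + a) * ((n : ℤ) + 1) ^ (cntM L + b)) * evalL X Y L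
        = Y ^ ((n : ℤ) ^ (cntM L + a) * ((n : ℤ) + 1) ^ (cntP L + b)) := by
  intro L
  induction L with
  | nil => intro a b; simp [evalL, cntP, cntM]
  | cons p T ih =>
    intro a b
    obtain ⟨g, s⟩ := p
    rw [evalL_cons, rearr]
    cases g with
    | false =>
      rw [cntP_cons_y, cntM_cons_y]
      dsimp only
      simp only [Bool.cond_false]
      have hy : (cond s Y Y⁻¹)⁻¹ *
          Y ^ ((n : ℤ) ^ (cntP T + a) * ((n : ℤ) + 1) ^ (cntM T + b)) * (cond s Y Y⁻¹)
          = Y ^ ((n : ℤ) ^ (cntP T + a) * ((n : ℤ) + 1) ^ (cntM T + b)) := by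
        cases s
        · simp only [Bool.cond_false]
          group
        · simp only [Bool.cond_true]
          group
      rw [hy]
      exact ih a b
    | true =>
      cases s with
      | true =>
        rw [cntP_cons_xx, cntM_cons_xx]
        dsimp only
        simp only [Bool.cond_true]
        have e1 : X⁻¹ * Y ^ ((n : ℤ) ^ (cntP T + 1 + a) * ((n : ℤ) + 1) ^ (cntM T + b)) * X
            = Y ^ ((n : ℤ) ^ (cntP T + a) * ((n : ℤ) + 1) ^ (cntM T + (b + 1))) := by
          have h2 := hP ((n : ℤ) ^ (cntP T + a) * ((n : ℤ) + 1) ^ (cntM T + b))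
          rw [show (n : ℤ) * ((n : ℤ) ^ (cntP T + a) * ((n : ℤ) + 1) ^ (cntM T + b))
              = (n : ℤ) ^ (cntP T + 1 + a) * ((n : ℤ) + 1) ^ (cntM T + b) from by ring,
            show ((n : ℤ) + 1) * ((n : ℤ) ^ (cntP T + a) * ((n : ℤ) + 1) ^ (cntM T + b))
              = (n : ℤ) ^ (cntP T + a) * ((n : ℤ) + 1) ^ (cntM T + (b + 1)) from by ring] at h2
          exact h2
        rw [e1]
        have h3 := ih a (b + 1)
        rw [show cntP T + (b + 1) = cntP T + 1 + b from by omega] at h3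
        exact h3
      | false =>
        rw [cntP_cons_xi, cntM_cons_xi]
        dsimp only
        simp only [Bool.cond_true, Bool.cond_false, inv_inv]
        have e1 : X * Y ^ ((n : ℤ) ^ (cntP T + a) * ((n : ℤ) + 1) ^ (cntM T + 1 + b)) * X⁻¹
            = Y ^ ((n : ℤ) ^ (cntP T + (a + 1)) * ((n : ℤ) + 1) ^ (cntM T + b)) := by
          have h2 := hM ((n : ℤ) ^ (cntP T + a) * ((n : ℤ) + 1) ^ (cntM T + b))
          rw [show ((n : ℤ) + 1) * ((n : ℤ) ^ (cntP T + a) * ((n : ℤ) + 1) ^ (cntM T + b))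
              = (n : ℤ) ^ (cntP T + a) * ((n : ℤ) + 1) ^ (cntM T + 1 + b) from by ring,
            show (n : ℤ) * ((n : ℤ) ^ (cntP T + a) * ((n : ℤ) + 1) ^ (cntM T + b))
              = (n : ℤ) ^ (cntP T + (a + 1)) * ((n : ℤ) + 1) ^ (cntM T + b) from by ring] at h2
          exact h2
        rw [e1]
        have h3 := ih (a + 1) b
        rw [show cntM T + (a + 1) = cntM T + 1 + a from by omega] at h3
        exact h3

lemma evalL_Yone (X : G) :
    ∀ L : List (Bool × Bool), evalL X (1 : G) L = X ^ ((cntP L : ℤ) - (cntM L : ℤ)) := by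
  intro L
  induction L with
  | nil => simp [evalL, cntP, cntM]
  | cons p T ih =>
    obtain ⟨g, s⟩ := p
    rw [evalL_cons, ih]
    cases g with
    | false =>
      rw [cntP_cons_y, cntM_cons_y]
      cases s <;> simp
    | true =>
      cases s with
      | true =>
        rw [cntP_cons_xx, cntM_cons_xx]
        dsimp only
        simp only [Bool.cond_true]
        rw [show X * X ^ ((cntP T : ℤ) - (cntM T : ℤ))
            = X ^ (1 + ((cntP T : ℤ) - (cntM T : ℤ))) from by rw [zpow_add, zpow_one]]
        congr 1
        push_cast
        ring
      | false =>
        rw [cntP_cons_xi, cntM_cons_xi]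
        dsimp only
        simp only [Bool.cond_true, Bool.cond_false]
        rw [show (X⁻¹ : G) = X ^ (-1 : ℤ) from by simp, ← zpow_add]
        congr 1
        push_cast
        ring

lemma sum_eq (χ : Bool → Multiplicative ℤ)
    (ht : χ true = Multiplicative.ofAdd 1) (hf : χ false = Multiplicative.ofAdd 0) :
    ∀ L : List (Bool × Bool),
      (L.map fun p => cond p.2 (χ p.1) (χ p.1)⁻¹).prod
        = Multiplicative.ofAdd ((cntP L : ℤ) - (cntM L : ℤ)) := by
  intro L
  induction L with
  | nil => simp [cntP, cntM]
  | cons p T ih =>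
    obtain ⟨g, s⟩ := p
    rw [List.map_cons, List.prod_cons, ih]
    cases g with
    | true =>
      cases s with
      | true =>
        rw [cntP_cons_xx, cntM_cons_xx]
        dsimp only
        simp only [Bool.cond_true]
        rw [ht, ← ofAdd_add]
        congr 1
        push_cast
        ring
      | false =>
        rw [cntP_cons_xi, cntM_cons_xi]
        dsimp only
        simp only [Bool.cond_true, Bool.cond_false]
        rw [ht, ← ofAdd_neg, ← ofAdd_add]
        congr 1
        push_cast
        ring
    | false =>
      rw [cntP_cons_y, cntM_cons_y]
      cases s with
      | true =>
        dsimp only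
        simp only [Bool.cond_true]
        rw [hf, ← ofAdd_add]
        congr 1
        ring
      | false =>
        dsimp only
        simp only [Bool.cond_true, Bool.cond_false]
        rw [hf, ← ofAdd_neg, ← ofAdd_add]
        congr 1
        ring

theorem aux (n : ℕ) (X Y : G)
    (h1 : X⁻¹ * Y ^ n * X = Y ^ (n + 1))
    (L : List (Bool × Bool)) (hL : evalL X Y L = X) (hc : cntP L = cntM L) :
    Y = 1 ∧ X = 1 := by
  have h1z : X⁻¹ * Y ^ (n : ℤ) * X = Y ^ ((n : ℤ) + 1) := by
    rw [zpow_natCast, show ((n : ℤ) + 1) = ((n + 1 : ℕ) : ℤ) from by push_cast; ring,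
      zpow_natCast]
    exact h1
  have hP : ∀ k : ℤ, X⁻¹ * Y ^ ((n : ℤ) * k) * X = Y ^ (((n : ℤ) + 1) * k) := by
    intro k
    rw [zpow_mul, zpow_mul]
    calc X⁻¹ * (Y ^ (n : ℤ)) ^ k * X
        = X⁻¹ * (Y ^ (n : ℤ)) ^ k * X⁻¹⁻¹ := by rw [inv_inv]
      _ = (X⁻¹ * Y ^ (n : ℤ) * X⁻¹⁻¹) ^ k := conj_zpow.symm
      _ = (X⁻¹ * Y ^ (n : ℤ) * X) ^ k := by rw [inv_inv]
      _ = (Y ^ ((n : ℤ) + 1)) ^ k := by rw [h1z]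
  have hM : ∀ k : ℤ, X * Y ^ (((n : ℤ) + 1) * k) * X⁻¹ = Y ^ ((n : ℤ) * k) := by
    intro k
    rw [← hP k]
    group
  set c := cntM L with hcdef
  have hpass := pass n X Y hP hM L 1 1
  rw [hL, hc] at hpass
  have hstep := hP ((n : ℤ) ^ c * ((n : ℤ) + 1) ^ (c + 1))
  rw [show (n : ℤ) * ((n : ℤ) ^ c * ((n : ℤ) + 1) ^ (c + 1))
      = (n : ℤ) ^ (c + 1) * ((n : ℤ) + 1) ^ (c + 1) from by ring] at hstep
  have heq : Y ^ (((n : ℤ) + 1) * ((n : ℤ) ^ c * ((n : ℤ) + 1) ^ (c + 1)))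
      = Y ^ ((n : ℤ) ^ (c + 1) * ((n : ℤ) + 1) ^ (c + 1)) := by
    rw [← hstep, hpass]
  have hD : Y ^ ((n : ℤ) ^ c * ((n : ℤ) + 1) ^ (c + 1)) = 1 := by
    rw [show ((n : ℤ) + 1) * ((n : ℤ) ^ c * ((n : ℤ) + 1) ^ (c + 1))
        = (n : ℤ) ^ c * ((n : ℤ) + 1) ^ (c + 1) + (n : ℤ) ^ (c + 1) * ((n : ℤ) + 1) ^ (c + 1)
        from by ring, zpow_add] at heq
    have h3 : Y ^ ((n : ℤ) ^ c * ((n : ℤ) + 1) ^ (c + 1)) *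
        Y ^ ((n : ℤ) ^ (c + 1) * ((n : ℤ) + 1) ^ (c + 1))
        = 1 * Y ^ ((n : ℤ) ^ (c + 1) * ((n : ℤ) + 1) ^ (c + 1)) := by
      rw [one_mul]; exact heq
    exact mul_right_cancel h3
  have la1 : ∀ k : ℤ, Y ^ ((n : ℤ) * k) = 1 → Y ^ (((n : ℤ) + 1) * k) = 1 := by
    intro k h
    rw [← hP k, h]
    group
  have la2 : ∀ k : ℤ, Y ^ (((n : ℤ) + 1) * k) = 1 → Y ^ ((n : ℤ) * k) = 1 := by
    intro k h
    rw [← hM k, h]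
    group
  have ladder1 : ∀ a b : ℕ, Y ^ ((n : ℤ) ^ a * ((n : ℤ) + 1) ^ b) = 1 →
      Y ^ (((n : ℤ) + 1) ^ (a + b)) = 1 := by
    intro a
    induction a with
    | zero => intro b h; rw [zero_add]; simpa using h
    | succ a ih =>
      intro b h
      have h' : Y ^ ((n : ℤ) * ((n : ℤ) ^ a * ((n : ℤ) + 1) ^ b)) = 1 := by
        rw [show (n : ℤ) * ((n : ℤ) ^ a * ((n : ℤ) + 1) ^ b)
            = (n : ℤ) ^ (a + 1) * ((n : ℤ) + 1) ^ b from by ring]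
        exact h
      have h'' := la1 _ h'
      rw [show ((n : ℤ) + 1) * ((n : ℤ) ^ a * ((n : ℤ) + 1) ^ b)
          = (n : ℤ) ^ a * ((n : ℤ) + 1) ^ (b + 1) from by ring] at h''
      have h4 := ih (b + 1) h''
      rw [show a + (b + 1) = a + 1 + b from by omega] at h4
      exact h4
  have ladder2 : ∀ b a : ℕ, Y ^ ((n : ℤ) ^ a * ((n : ℤ) + 1) ^ b) = 1 →
      Y ^ ((n : ℤ) ^ (a + b)) = 1 := by
    intro b
    induction b with
    | zero => intro a h; rw [add_zero]; simpa using h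
    | succ b ih =>
      intro a h
      have h' : Y ^ (((n : ℤ) + 1) * ((n : ℤ) ^ a * ((n : ℤ) + 1) ^ b)) = 1 := by
        rw [show ((n : ℤ) + 1) * ((n : ℤ) ^ a * ((n : ℤ) + 1) ^ b)
            = (n : ℤ) ^ a * ((n : ℤ) + 1) ^ (b + 1) from by ring]
        exact h
      have h'' := la2 _ h'
      rw [show (n : ℤ) * ((n : ℤ) ^ a * ((n : ℤ) + 1) ^ b)
          = (n : ℤ) ^ (a + 1) * ((n : ℤ) + 1) ^ b from by ring] at h''
      have h4 := ih (a + 1) h''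
      rw [show a + 1 + b = a + (b + 1) from by omega] at h4
      exact h4
  have hA := ladder1 c (c + 1) hD
  have hB := ladder2 (c + 1) c hD
  have hcop1 : IsCoprime (n : ℤ) ((n : ℤ) + 1) := ⟨-1, 1, by ring⟩
  have hcop : IsCoprime ((n : ℤ) ^ (c + (c + 1))) (((n : ℤ) + 1) ^ (c + (c + 1))) :=
    hcop1.pow
  obtain ⟨u, v, huv⟩ := hcop
  have hY : Y = 1 := by
    have hy1 : Y = Y ^ (u * (n : ℤ) ^ (c + (c + 1)) + v * ((n : ℤ) + 1) ^ (c + (c + 1))) := by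
      rw [huv, zpow_one]
    rw [hy1, zpow_add, mul_comm u, mul_comm v, zpow_mul, zpow_mul, hA, hB]
    simp
  refine ⟨hY, ?_⟩
  rw [hY] at hL
  rw [evalL_Yone, hc] at hL
  rw [← hL]
  simp [hcdef]

end MSAux

/-- For every n ≥ 1 and every word w in F(x, y) with exponent sum 0 on x, the
Miller–Schupp presentation ⟨x, y | x⁻¹yⁿx = yⁿ⁺¹, x = w⟩ presents the trivial group.
Here `true` plays the role of x and `false` of y, and the exponent-sum condition is
that the homomorphism F(x,y) → ℤ with x ↦ 1, y ↦ 0 kills w. -/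
theorem stmt_3 (n : ℕ) (hn : 1 ≤ n) (w : FreeGroup Bool)
    (hw : FreeGroup.lift
      (fun b => if b then Multiplicative.ofAdd (1 : ℤ) else Multiplicative.ofAdd 0) w = 1) :
    Subsingleton (PresentedGroup
      ({(FreeGroup.of true)⁻¹ * FreeGroup.of false ^ n * FreeGroup.of true *
          (FreeGroup.of false ^ (n + 1))⁻¹,
        FreeGroup.of true * w⁻¹} :
        Set (FreeGroup Bool))) := by
  set rels : Set (FreeGroup Bool) :=
    {(FreeGroup.of true)⁻¹ * FreeGroup.of false ^ n * FreeGroup.of true *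
        (FreeGroup.of false ^ (n + 1))⁻¹,
      FreeGroup.of true * w⁻¹} with hrels
  set Φ : FreeGroup Bool →* PresentedGroup rels := PresentedGroup.mk rels with hΦ
  have key : ∀ r ∈ rels, Φ r = 1 := fun r hr =>
    (QuotientGroup.eq_one_iff r).mpr (Subgroup.subset_normalClosure hr)
  set X : PresentedGroup rels := Φ (FreeGroup.of true) with hX
  set Y : PresentedGroup rels := Φ (FreeGroup.of false) with hYdef
  have h1 : X⁻¹ * Y ^ n * X = Y ^ (n + 1) := by
    have h0 := key _ (Set.mem_insert _ _)
    simp only [map_mul, map_inv, map_pow] at h0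
    exact mul_inv_eq_one.mp h0
  have hXw : Φ w = X := by
    have h0 := key (FreeGroup.of true * w⁻¹) (by right; rfl)
    simp only [map_mul, map_inv] at h0
    exact (mul_inv_eq_one.mp h0).symm
  have hlift : Φ w = FreeGroup.lift (fun b => cond b X Y) w :=
    FreeGroup.lift_unique Φ (fun x => by cases x <;> rfl)
  have hE : MSAux.evalL X Y w.toWord = X := by
    have h2 : MSAux.evalL X Y w.toWord
        = FreeGroup.lift (fun b => cond b X Y) (FreeGroup.mk w.toWord) := rfl
    rw [h2, FreeGroup.mk_toWord, ← hlift, hXw]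
  have hc : MSAux.cntP w.toWord = MSAux.cntM w.toWord := by
    have h3 : FreeGroup.lift
        (fun b => if b then Multiplicative.ofAdd (1 : ℤ) else Multiplicative.ofAdd 0) w
        = Multiplicative.ofAdd ((MSAux.cntP w.toWord : ℤ) - (MSAux.cntM w.toWord : ℤ)) := by
      conv_lhs => rw [← FreeGroup.mk_toWord (x := w)]
      rw [FreeGroup.lift_mk]
      exact MSAux.sum_eq
        (fun b => if b then Multiplicative.ofAdd (1 : ℤ) else Multiplicative.ofAdd 0)
        rfl rfl w.toWord
    rw [hw] at h3
    have h4 := congrArg Multiplicative.toAdd h3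
    simp only [toAdd_one, toAdd_ofAdd] at h4
    have h5 : (MSAux.cntP w.toWord : ℤ) = (MSAux.cntM w.toWord : ℤ) := by linarith
    exact_mod_cast h5
  obtain ⟨hY1, hX1⟩ := MSAux.aux n X Y h1 w.toWord hE hc
  have trivAll : ∀ g : PresentedGroup rels, g = 1 := by
    intro g
    obtain ⟨v, rfl⟩ := PresentedGroup.mk_surjective rels g
    induction v using FreeGroup.induction_on with
    | C1 => exact map_one _
    | of x =>
      cases x with
      | true => exact hX1
      | false => exact hY1
    | inv_of x ih => rw [map_inv, ih, inv_one]
    | mul x y ihx ihy => rw [map_mul, ihx, ihy, one_mul]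
  exact ⟨fun a b => (trivAll a).trans (trivAll b).symm⟩
end

section
/- Let K be a finite regular CW-complex and let M be a matching on the pairs (v, e) where v is a 0-cell and e is a 1-cell of K with v a face of e, such that exactly one 0-cell is unmatched. Let T be the subgraph of the 1-skeleton of K consisting of all matched cells (with their closures). Then M is acyclic (i.e., the directed graph obtained from the Hasse diagram of the face poset by reversing the edges of matched pairs has no directed cycle) if and only if T is a spanning tree of the 1-skeleton of K. -/
/-- Matchings between vertices and edges with a single unmatched vertex:
the matching is acyclic (no directed cycle in the incidence digraph where matched
vertex–edge pairs are traversed upwards and unmatched incidences downwards) if and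
only if the set of matched edges forms a spanning tree of the (connected) graph G. -/
theorem stmt_11 {V : Type*} [Fintype V] (G : SimpleGraph V) (hG : G.Connected)
    (M : Set (V × Sym2 V))
    (hMinc : ∀ p ∈ M, p.2 ∈ G.edgeSet ∧ p.1 ∈ p.2)
    (hMv : ∀ v e e', (v, e) ∈ M → (v, e') ∈ M → e = e')
    (hMe : ∀ v v' e, (v, e) ∈ M → (v', e) ∈ M → v = v')
    (hone : ∃! v : V, ∀ e, (v, e) ∉ M)
    (step : (V ⊕ Sym2 V) → (V ⊕ Sym2 V) → Prop)
    (hstep : ∀ a b, step a b ↔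
      ((∃ v e, a = Sum.inr e ∧ b = Sum.inl v ∧ e ∈ G.edgeSet ∧ v ∈ e ∧ (v, e) ∉ M) ∨
       (∃ v e, a = Sum.inl v ∧ b = Sum.inr e ∧ (v, e) ∈ M))) :
    (∀ c, ¬ Relation.TransGen step c c) ↔
      (SimpleGraph.fromEdgeSet {e | ∃ v, (v, e) ∈ M}).IsTree := by
  classical
  obtain ⟨u, hu, huniq⟩ := hone
  set T : SimpleGraph V := SimpleGraph.fromEdgeSet {e | ∃ v, (v, e) ∈ M} with hTdef
  -- the "successor" function F : for a matched vertex v, the other endpoint of its edge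
  have exF : ∀ v : V, ∃ w : V,
      ((∃ e, (v, e) ∈ M) → ((v, s(v, w)) ∈ M ∧ w ≠ v ∧ s(v, w) ∈ G.edgeSet)) ∧
      ((¬ ∃ e, (v, e) ∈ M) → w = v) := by
    intro v
    by_cases h : ∃ e, (v, e) ∈ M
    · obtain ⟨e, he⟩ := h
      obtain ⟨hedge, hvmem⟩ := hMinc _ he
      refine ⟨Sym2.Mem.other hvmem, fun _ => ?_, fun h' => absurd ⟨e, he⟩ h'⟩
      have hspec : s(v, Sym2.Mem.other hvmem) = e := Sym2.other_spec hvmem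
      refine ⟨by rw [hspec]; exact he, ?_, by rw [hspec]; exact hedge⟩
      exact Sym2.other_ne (G.not_isDiag_of_mem_edgeSet hedge) hvmem
    · exact ⟨v, fun h' => absurd h' h, fun _ => rfl⟩
  choose F hF1 hF2 using exF
  have hFM : ∀ v, (∃ e, (v, e) ∈ M) → (v, s(v, F v)) ∈ M := fun v h => (hF1 v h).1
  have hFne : ∀ v, (∃ e, (v, e) ∈ M) → F v ≠ v := fun v h => (hF1 v h).2.1
  have hFedge : ∀ v, (∃ e, (v, e) ∈ M) → s(v, F v) ∈ G.edgeSet := fun v h => (hF1 v h).2.2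
  have hFe : ∀ v e, (v, e) ∈ M → e = s(v, F v) := fun v e h => hMv v e _ h (hFM v ⟨e, h⟩)
  have hfixit : ∀ (n : ℕ) (v : V), ¬(∃ e, (v, e) ∈ M) → F^[n] v = v := by
    intro n v h
    exact Function.iterate_fixed (hF2 v h) n
  have hequ : ∀ v, ¬(∃ e, (v, e) ∈ M) → v = u := by
    intro v h
    push_neg at h
    exact huniq v h
  have humat : ¬ ∃ e, (u, e) ∈ M := by
    rintro ⟨e, he⟩; exact hu e he
  -- adjacency in T
  have hadjF : ∀ v, (∃ e, (v, e) ∈ M) → T.Adj v (F v) := by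
    intro v h
    rw [hTdef, SimpleGraph.fromEdgeSet_adj]
    exact ⟨⟨v, hFM v h⟩, Ne.symm (hFne v h)⟩
  have hadjcases : ∀ x y, T.Adj x y →
      ((∃ e, (x, e) ∈ M) ∧ y = F x) ∨ ((∃ e, (y, e) ∈ M) ∧ x = F y) := by
    intro x y hxy
    rw [hTdef, SimpleGraph.fromEdgeSet_adj] at hxy
    obtain ⟨⟨w, hw⟩, hne⟩ := hxy
    have hwmem : w ∈ s(x, y) := (hMinc _ hw).2
    rcases Sym2.mem_iff.1 hwmem with rfl | rfl
    · left
      refine ⟨⟨_, hw⟩, ?_⟩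
      have := hFe _ _ hw
      rcases Sym2.eq_iff.1 this with ⟨-, h2⟩ | ⟨h1, h2⟩
      · exact h2
      · exact absurd h1.symm (hFne w ⟨_, hw⟩)
    · right
      refine ⟨⟨_, hw⟩, ?_⟩
      have hw' : (w, s(w, x)) ∈ M := by rwa [Sym2.eq_swap] at hw
      have := hFe _ _ hw'
      rcases Sym2.eq_iff.1 this with ⟨-, h2⟩ | ⟨h1, h2⟩
      · exact h2
      · exact absurd h1.symm (hFne w ⟨_, hw'⟩)
  -- (A) no step-cycles implies every vertex drains to u under F
  have hA : (∀ c, ¬ Relation.TransGen step c c) → ∀ v, ∃ n, F^[n] v = u := by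
    intro hnc
    have hchain : ∀ v, (∃ e, (v, e) ∈ M) →
        Relation.TransGen step (Sum.inl v) (Sum.inl (F v)) := by
      intro v h
      have s1 : step (Sum.inl v) (Sum.inr s(v, F v)) :=
        (hstep _ _).2 (Or.inr ⟨v, s(v, F v), rfl, rfl, hFM v h⟩)
      have s2 : step (Sum.inr s(v, F v)) (Sum.inl (F v)) := by
        refine (hstep _ _).2 (Or.inl ⟨F v, s(v, F v), rfl, rfl, hFedge v h, ?_, ?_⟩)
        · exact Sym2.mem_mk_right v (F v)
        · intro hFm
          exact hFne v h (hMe _ _ _ hFm (hFM v h))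
      exact Relation.TransGen.head s1 (Relation.TransGen.single s2)
    have hchainN : ∀ (n : ℕ) (v : V), 0 < n → (∀ i, i < n → (∃ e, (F^[i] v, e) ∈ M)) →
        Relation.TransGen step (Sum.inl v) (Sum.inl (F^[n] v)) := by
      intro n
      induction n with
      | zero => intro v h; omega
      | succ n ih =>
        intro v _ hall
        by_cases hn : n = 0
        · subst hn
          simpa using hchain v (by simpa using hall 0 (by omega))
        · have h1 := ih v (Nat.pos_of_ne_zero hn) (fun i hi => hall i (by omega))
          have h2 := hchain (F^[n] v) (hall n (by omega))
          rw [← Function.iterate_succ_apply' F n v] at h2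
          exact h1.trans h2
    have hnoF : ∀ (v : V) (n : ℕ), 0 < n → (∃ e, (v, e) ∈ M) → F^[n] v ≠ v := by
      intro v n hn hm heq
      have hall : ∀ i, i < n → ∃ e, (F^[i] v, e) ∈ M := by
        intro i hi
        by_contra hnm
        have h1 : F^[n] v = F^[i] v := by
          have : F^[n - i + i] v = F^[n - i] (F^[i] v) := Function.iterate_add_apply F _ _ v
          rw [Nat.sub_add_cancel hi.le] at this
          rw [this, hfixit _ _ hnm]
        rw [heq] at h1
        exact hnm (h1 ▸ hm)
      exact hnc _ (heq ▸ hchainN n v hn hall)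
    intro v
    have hninj : ¬ Function.Injective (fun k : Fin (Fintype.card V + 1) => F^[k.1] v) := by
      intro hinj
      have := Fintype.card_le_of_injective _ hinj
      simp [Fintype.card_fin] at this
    rw [Function.not_injective_iff] at hninj
    obtain ⟨i, j, hfe, hne⟩ := hninj
    have key : ∀ (i j : ℕ), i < j → F^[i] v = F^[j] v → ∃ n, F^[n] v = u := by
      intro i j hij hfe
      have h1 : F^[j - i] (F^[i] v) = F^[i] v := by
        have : F^[j - i + i] v = F^[j - i] (F^[i] v) := Function.iterate_add_apply F _ _ v
        rw [Nat.sub_add_cancel hij.le] at this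
        rw [← this, ← hfe]
      have h2 : ¬ ∃ e, (F^[i] v, e) ∈ M := fun hm => hnoF _ _ (by omega) hm h1
      exact ⟨i, hequ _ h2⟩
    rcases (Fin.val_ne_iff.2 hne).lt_or_gt with h | h
    · exact key _ _ h hfe
    · exact key _ _ h hfe.symm
  -- (B) T connected implies every vertex drains to u under F
  have hB : T.Connected → ∀ v, ∃ n, F^[n] v = u := by
    intro hc v
    have key : ∀ {x y : V} (_ : T.Walk x y), (∃ n, F^[n] y = u) → ∃ n, F^[n] x = u := by
      intro x y p
      induction p with
      | nil => exact id
      | @cons x z y hadj q ih =>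
        intro hy
        obtain ⟨n, hn⟩ := ih hy
        rcases hadjcases _ _ hadj with ⟨hm, hzF⟩ | ⟨hm, hxF⟩
        · refine ⟨n + 1, ?_⟩
          rw [Function.iterate_succ_apply, ← hzF]
          exact hn
        · rcases n with - | m
          · exfalso
            simp only [Function.iterate_zero_apply] at hn
            exact (hn ▸ humat) hm
          · refine ⟨m, ?_⟩
            rw [hxF, ← Function.iterate_succ_apply]
            exact hn
    exact key (hc.preconnected v u).some ⟨0, rfl⟩
  -- rank facts, given drainage
  have hrank : ∀ (hdrain : ∀ v, ∃ n, F^[n] v = u), ∃ r : V → ℕ,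
      (∀ v, F^[r v] v = u) ∧ (∀ v, (∃ e, (v, e) ∈ M) → 0 < r v) ∧
      (∀ v, (∃ e, (v, e) ∈ M) → r (F v) < r v) := by
    intro hdrain
    refine ⟨fun v => Nat.find (hdrain v), fun v => Nat.find_spec (hdrain v), ?_, ?_⟩
    · intro v hm
      rcases Nat.eq_zero_or_pos (Nat.find (hdrain v)) with h | h
      · exfalso
        have := Nat.find_spec (hdrain v)
        rw [h, Function.iterate_zero_apply] at this
        exact (this ▸ humat) hm
      · exact h
    · intro v hm
      have hpos : 0 < Nat.find (hdrain v) := by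
        rcases Nat.eq_zero_or_pos (Nat.find (hdrain v)) with h | h
        · exfalso
          have := Nat.find_spec (hdrain v)
          rw [h, Function.iterate_zero_apply] at this
          exact (this ▸ humat) hm
        · exact h
      have h1 : F^[Nat.find (hdrain v) - 1] (F v) = u := by
        have h0 := Nat.find_spec (hdrain v)
        rw [show Nat.find (hdrain v) = Nat.find (hdrain v) - 1 + 1 from by omega,
          Function.iterate_succ_apply] at h0
        exact h0
      have h2 : Nat.find (hdrain (F v)) ≤ Nat.find (hdrain v) - 1 := Nat.find_le h1
      show Nat.find (hdrain (F v)) < Nat.find (hdrain v)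
      omega
  -- (C) drainage implies no step-cycles
  have hC : (∀ v, ∃ n, F^[n] v = u) → ∀ c, ¬ Relation.TransGen step c c := by
    intro hdrain
    obtain ⟨r, hrspec, hrpos, hrF⟩ := hrank hdrain
    set ρ : V ⊕ Sym2 V → ℕ∞ := Sum.elim (fun v => ((2 * r v : ℕ) : ℕ∞))
      (fun e => if h : ∃ w, (w, e) ∈ M then ((2 * r (Classical.choose h) - 1 : ℕ) : ℕ∞) else ⊤)
      with hρ
    have hstepρ : ∀ a b, step a b → ρ b < ρ a := by
      intro a b hab
      rcases (hstep a b).1 hab with ⟨v, e, rfl, rfl, hge, hve, hvm⟩ | ⟨v, e, rfl, rfl, hm⟩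
      · simp only [hρ, Sum.elim_inl, Sum.elim_inr]
        by_cases h : ∃ w, (w, e) ∈ M
        · rw [dif_pos h]
          have hw : (Classical.choose h, e) ∈ M := Classical.choose_spec h
          set w := Classical.choose h with hwdef
          have hmw : ∃ e', (w, e') ∈ M := ⟨e, hw⟩
          have he : e = s(w, F w) := hFe _ _ hw
          have hvFw : v = F w := by
            have hv2 : v ∈ s(w, F w) := he ▸ hve
            rcases Sym2.mem_iff.1 hv2 with rfl | h2
            · exact absurd hw hvm
            · exact h2
          have l1 : 0 < r w := hrpos w hmw
          have l2 : r (F w) < r w := hrF w hmw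
          rw [hvFw]
          exact_mod_cast (by omega : 2 * r (F w) < 2 * r w - 1)
        · rw [dif_neg h]
          exact ENat.coe_lt_top _
      · simp only [hρ, Sum.elim_inl, Sum.elim_inr]
        have h : ∃ w, (w, e) ∈ M := ⟨v, hm⟩
        rw [dif_pos h]
        have hcv : Classical.choose h = v := hMe _ _ _ (Classical.choose_spec h) hm
        rw [hcv]
        have l1 : 0 < r v := hrpos v ⟨e, hm⟩
        exact_mod_cast (by omega : 2 * r v - 1 < 2 * r v)
    intro c hc
    have h2 : Relation.TransGen (fun a b => ρ b < ρ a) c c :=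
      Relation.TransGen.mono hstepρ c c hc
    have ht : Transitive fun a b : V ⊕ Sym2 V => ρ b < ρ a :=
      fun _ _ _ h1 h2 => h2.trans h1
    rw [@Relation.transGen_eq_self _ _ ⟨ht⟩] at h2
    exact lt_irrefl _ h2
  -- (D) drainage implies T is a tree
  have hD : (∀ v, ∃ n, F^[n] v = u) → T.IsTree := by
    intro hdrain
    obtain ⟨r, hrspec, hrpos, hrF⟩ := hrank hdrain
    have hreach : ∀ (n : ℕ) (v : V), F^[n] v = u → T.Reachable v u := by
      intro n
      induction n with
      | zero =>
        intro v hv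
        rw [Function.iterate_zero_apply] at hv
        exact hv ▸ SimpleGraph.Reachable.refl v
      | succ n ih =>
        intro v hv
        by_cases hm : ∃ e, (v, e) ∈ M
        · exact ((hadjF v hm).reachable).trans
            (ih (F v) (by rw [← Function.iterate_succ_apply]; exact hv))
        · exact (hequ v hm) ▸ SimpleGraph.Reachable.refl v
    have hconn : T.Connected := by
      rw [SimpleGraph.connected_iff]
      refine ⟨fun x y => ?_, ⟨u⟩⟩
      obtain ⟨n, hn⟩ := hdrain x
      obtain ⟨m, hm⟩ := hdrain y
      exact (hreach n x hn).trans (hreach m y hm).symm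
    refine ⟨hconn, ?_⟩
    intro a c hc
    cases c with
    | nil => exact hc.ne_nil rfl
    | @cons _ z _ hadj q =>
      set c' := SimpleGraph.Walk.cons hadj q with hc'def
      set μ : Sym2 V → V := fun e =>
        if h : ∃ w, (w, e) ∈ M then Classical.choose h else u with hμ
      have hμM : ∀ e, e ∈ T.edgeSet → (μ e, e) ∈ M := by
        intro e he
        rw [hTdef, SimpleGraph.edgeSet_fromEdgeSet] at he
        have hS : ∃ w, (w, e) ∈ M := he.1
        rw [hμ]
        simp only [dif_pos hS]
        exact Classical.choose_spec hS
      have hedgeT : ∀ e, e ∈ c'.edges → e ∈ T.edgeSet := fun e he =>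
        c'.edges_subset_edgeSet he
      set B := q.support.toFinset with hB
      set EA := c'.edges.toFinset with hEA
      have hqnodup : q.support.Nodup := by
        have := hc.support_nodup
        simpa [hc'def] using this
      have hmapB : ∀ x, x ∈ c'.support → x ∈ B := by
        intro x hx
        rw [hc'def, SimpleGraph.Walk.support_cons] at hx
        rcases List.mem_cons.1 hx with rfl | hx
        · exact List.mem_toFinset.2 q.end_mem_support
        · exact List.mem_toFinset.2 hx
      have hcardB : B.card = q.length + 1 := by
        rw [hB, List.toFinset_card_of_nodup hqnodup, SimpleGraph.Walk.length_support]
      have hcardEA : EA.card = q.length + 1 := by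
        rw [hEA, List.toFinset_card_of_nodup hc.edges_nodup,
          SimpleGraph.Walk.length_edges]
        simp [hc'def]
      have hf : ∀ (e : Sym2 V) (he : e ∈ EA), μ e ∈ B := by
        intro e he
        have heM : (μ e, e) ∈ M := hμM e (hedgeT e (List.mem_toFinset.1 he))
        have heq : e = s(μ e, F (μ e)) := hFe _ _ heM
        have hmem : s(μ e, F (μ e)) ∈ c'.edges := by
          rw [← heq]; exact List.mem_toFinset.1 he
        exact hmapB _ (SimpleGraph.Walk.fst_mem_support_of_mem_edges c' hmem)
      have hinj : ∀ (e₁ e₂ : Sym2 V) (h₁ : e₁ ∈ EA) (h₂ : e₂ ∈ EA),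
          μ e₁ = μ e₂ → e₁ = e₂ := by
        intro e₁ e₂ h₁ h₂ hμeq
        have h₁M : (μ e₁, e₁) ∈ M := hμM e₁ (hedgeT e₁ (List.mem_toFinset.1 h₁))
        have h₂M : (μ e₂, e₂) ∈ M := hμM e₂ (hedgeT e₂ (List.mem_toFinset.1 h₂))
        rw [hμeq] at h₁M
        exact hMv _ _ _ h₁M h₂M
      have hsurj := Finset.surj_on_of_inj_on_of_card_le (fun e _ => μ e)
        hf hinj (by omega)
      obtain ⟨x, hxB, hxmin⟩ := Finset.exists_min_image B r
        ⟨a, List.mem_toFinset.2 q.end_mem_support⟩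
      obtain ⟨e, heEA, hxe⟩ := hsurj x hxB
      have hxM : (x, e) ∈ M := by
        rw [hxe]
        exact hμM e (hedgeT e (List.mem_toFinset.1 heEA))
      have heq : e = s(x, F x) := hFe _ _ hxM
      have hFxB : F x ∈ B := by
        have hmem : s(x, F x) ∈ c'.edges := by
          rw [← heq]; exact List.mem_toFinset.1 heEA
        exact hmapB _ (SimpleGraph.Walk.snd_mem_support_of_mem_edges c' hmem)
      have h1 : r (F x) < r x := hrF x ⟨e, hxM⟩
      have h2 : r x ≤ r (F x) := hxmin (F x) hFxB
      omega
  constructor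
  · intro h
    exact hD (hA h)
  · intro h
    exact hC (hB h.isConnected)
end

section
/- Let P be a finite graded poset (every element has a well-defined dimension/rank) and M an acyclic matching on P. Then there exists a linear extension L of the order induced by the directed acyclic graph H_M(P) such that matched pairs appear consecutively in L and, moreover, L refines the order by rank among matched pairs: if (a,b) and (a',b') are matched pairs with (a',b') preceding (a,b) in L, then rank(b') ≤ rank(b). -/
open Classical Finset

set_option linter.unusedSectionVars false

namespace Stmt13

variable {P : Type*} [Fintype P] [PartialOrder P]

/-- The "top" of the class of `x`: its matched partner above it, if any, else itself. -/
noncomputable def c (M : Set (P × P)) (x : P) : P :=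
  if h : ∃ b, (x, b) ∈ M then h.choose else x

lemma c_spec (M : Set (P × P)) (x : P) : c M x = x ∨ (x, c M x) ∈ M := by
  unfold c; split
  · next h => exact Or.inr h.choose_spec
  · exact Or.inl rfl

lemma c_eq_top {M : Set (P × P)} (hM1 : ∀ a b b', (a, b) ∈ M → (a, b') ∈ M → b = b')
    {a b : P} (hab : (a, b) ∈ M) : c M a = b := by
  have h : ∃ b', (a, b') ∈ M := ⟨b, hab⟩
  unfold c
  rw [dif_pos h]
  exact hM1 a h.choose b h.choose_spec hab

lemma c_top {M : Set (P × P)} (hM3 : ∀ a b c, (a, b) ∈ M → (b, c) ∈ M → False)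
    {a b : P} (hab : (a, b) ∈ M) : c M b = b := by
  unfold c
  rw [dif_neg]
  rintro ⟨c', hc'⟩
  exact hM3 a b c' hab hc'

/-- Auxiliary relation on class representatives: an equality-rank edge. -/
def E (M : Set (P × P)) (rk : P → ℕ) (step : P → P → Prop) (u v : P) : Prop :=
  u ≠ v ∧ rk u = rk v ∧ ∃ x y, step x y ∧ c M x = v ∧ c M y = u

noncomputable def tcnt (M : Set (P × P)) (rk : P → ℕ) (step : P → P → Prop) (u : P) : ℕ :=
  (univ.filter fun w => Relation.TransGen (E M rk step) w u).card

noncomputable def idx (x : P) : ℕ := (Fintype.equivFin P x : ℕ)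

lemma idx_lt (x : P) : idx x < Fintype.card P := (Fintype.equivFin P x).isLt

lemma idx_inj {x y : P} (h : idx x = idx y) : x = y := by
  have := Fin.val_injective h
  exact (Fintype.equivFin P).injective this

lemma tcnt_le (M : Set (P × P)) (rk : P → ℕ) (step : P → P → Prop) (u : P) :
    tcnt M rk step u ≤ Fintype.card P := by
  classical
  exact (Finset.card_filter_le _ _).trans (le_of_eq (Finset.card_univ))

noncomputable def keyC (M : Set (P × P)) (rk : P → ℕ) (step : P → P → Prop) (u : P) : ℕ :=
  idx u + (Fintype.card P + 1) *
    (tcnt M rk step u + (Fintype.card P + 1) * rk u)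

noncomputable def off (M : Set (P × P)) (x : P) : ℕ := if c M x = x then 1 else 0

noncomputable def key (M : Set (P × P)) (rk : P → ℕ) (step : P → P → Prop) (x : P) : ℕ :=
  off M x + 2 * keyC M rk step (c M x)

lemma digit_lt {a b x y n : ℕ} (ha : a < n) (hxy : x < y) :
    a + n * x < b + n * y := by
  have h1 : a + n * x < n * (x + 1) := by nlinarith
  have h2 : n * (x + 1) ≤ n * y := Nat.mul_le_mul_left n hxy
  omega

lemma digit_inj {a b x y n : ℕ} (ha : a < n) (hb : b < n)
    (h : a + n * x = b + n * y) : a = b ∧ x = y := by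
  have hx : (a + n * x) % n = a := by
    rw [Nat.add_mul_mod_self_left]; exact Nat.mod_eq_of_lt ha
  have hy : (b + n * y) % n = b := by
    rw [Nat.add_mul_mod_self_left]; exact Nat.mod_eq_of_lt hb
  have hab : a = b := by rw [← hx, ← hy, h]
  constructor
  · exact hab
  · subst hab
    have : n * x = n * y := by omega
    exact Nat.eq_of_mul_eq_mul_left (by omega) this


section
variable {M : Set (P × P)} {rk : P → ℕ} {step : P → P → Prop}

lemma rk_c (hrk : ∀ a b : P, a ⋖ b → rk b = rk a + 1)
    (hcov : ∀ p ∈ M, p.1 ⋖ p.2) (x : P) :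
    c M x = x ∨ ((x, c M x) ∈ M ∧ rk (c M x) = rk x + 1) := by
  rcases c_spec M x with h | h
  · exact Or.inl h
  · exact Or.inr ⟨h, hrk x _ (hcov _ h)⟩

lemma c_ne (hcov : ∀ p ∈ M, p.1 ⋖ p.2)
    (hM2 : ∀ a a' b, (a, b) ∈ M → (a', b) ∈ M → a = a')
    {a b : P} (hab : a ⋖ b) (hnM : (a, b) ∉ M) : c M a ≠ c M b := by
  intro h
  rcases c_spec M a with ha | ha <;> rcases c_spec M b with hb | hb
  · exact hab.ne (by rw [← ha, h, hb])
  · have hba : c M b = a := by rw [← h, ha]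
    have : (b, a) ∈ M := hba ▸ hb
    exact absurd hab.lt (lt_asymm (hcov _ this).lt)
  · have hcab : c M a = b := by rw [h, hb]
    exact hnM (hcab ▸ ha)
  · exact hab.ne (hM2 a b (c M b) (h ▸ ha) hb)

lemma step_down (hM1 : ∀ a b b', (a, b) ∈ M → (a, b') ∈ M → b = b')
    (hM3 : ∀ a b c, (a, b) ∈ M → (b, c) ∈ M → False)
    (hstep : ∀ x y, step x y ↔ ((y ⋖ x ∧ (y, x) ∉ M) ∨ (x ⋖ y ∧ (x, y) ∈ M)))
    {x y : P} (hs : step x y) (hne : c M x ≠ c M y) : y ⋖ x ∧ (y, x) ∉ M := by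
  rcases (hstep x y).1 hs with h | h
  · exact h
  · exact absurd (by rw [c_eq_top hM1 h.2, c_top hM3 h.2]) hne

lemma E_lift (hrk : ∀ a b : P, a ⋖ b → rk b = rk a + 1)
    (hcov : ∀ p ∈ M, p.1 ⋖ p.2)
    (hM1 : ∀ a b b', (a, b) ∈ M → (a, b') ∈ M → b = b')
    (hM3 : ∀ a b c, (a, b) ∈ M → (b, c) ∈ M → False)
    (hstep : ∀ x y, step x y ↔ ((y ⋖ x ∧ (y, x) ∉ M) ∨ (x ⋖ y ∧ (x, y) ∈ M)))
    {u v : P} (h : E M rk step u v) : Relation.TransGen step v u := by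
  obtain ⟨hne, hrkeq, x, y, hs, hx, hy⟩ := h
  have hcxy : c M x ≠ c M y := by rw [hx, hy]; exact fun h' => hne (h'.symm)
  have hd := step_down hM1 hM3 hstep hs hcxy
  have hxy : rk x = rk y + 1 := hrk y x hd.1
  have hcx : c M x = x := by
    rcases rk_c hrk hcov x with h' | h'
    · exact h'
    · exfalso
      rcases rk_c hrk hcov y with h'' | h''
      · rw [← hx, ← hy] at hrkeq; rw [h''] at hrkeq
        omega
      · rw [← hx, ← hy] at hrkeq; rw [h'.2, h''.2] at hrkeq; omega
  have hcy : (y, c M y) ∈ M := by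
    rcases rk_c hrk hcov y with h'' | h''
    · exfalso
      rw [← hx, ← hy, hcx, h''] at hrkeq
      omega
    · exact h''.1
  have hyu : (y, u) ∈ M := by rwa [hy] at hcy
  have hstep2 : step y u := (hstep y u).2 (Or.inr ⟨hcov _ hyu, hyu⟩)
  have hvx : v = x := by rw [← hx, hcx]
  subst hvx
  exact Relation.TransGen.head hs (Relation.TransGen.single hstep2)

lemma TGE_irrefl (hrk : ∀ a b : P, a ⋖ b → rk b = rk a + 1)
    (hcov : ∀ p ∈ M, p.1 ⋖ p.2)
    (hM1 : ∀ a b b', (a, b) ∈ M → (a, b') ∈ M → b = b')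
    (hM3 : ∀ a b c, (a, b) ∈ M → (b, c) ∈ M → False)
    (hstep : ∀ x y, step x y ↔ ((y ⋖ x ∧ (y, x) ∉ M) ∨ (x ⋖ y ∧ (x, y) ∈ M)))
    (hacyc : ∀ x, ¬ Relation.TransGen step x x) (u : P) :
    ¬ Relation.TransGen (E M rk step) u u := by
  intro h
  have lift : ∀ a b : P, Relation.TransGen (E M rk step) a b → Relation.TransGen step b a := by
    intro a b h
    induction h with
    | single h1 => exact E_lift hrk hcov hM1 hM3 hstep h1
    | tail _ h2 ih => exact Relation.TransGen.trans (E_lift hrk hcov hM1 hM3 hstep h2) ih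
  exact hacyc u (lift u u h)

lemma tcnt_lt (hrk : ∀ a b : P, a ⋖ b → rk b = rk a + 1)
    (hcov : ∀ p ∈ M, p.1 ⋖ p.2)
    (hM1 : ∀ a b b', (a, b) ∈ M → (a, b') ∈ M → b = b')
    (hM3 : ∀ a b c, (a, b) ∈ M → (b, c) ∈ M → False)
    (hstep : ∀ x y, step x y ↔ ((y ⋖ x ∧ (y, x) ∉ M) ∨ (x ⋖ y ∧ (x, y) ∈ M)))
    (hacyc : ∀ x, ¬ Relation.TransGen step x x)
    {u v : P} (h : E M rk step u v) : tcnt M rk step u < tcnt M rk step v := by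
  apply Finset.card_lt_card
  have hsub : (univ.filter fun w => Relation.TransGen (E M rk step) w u) ⊆
      (univ.filter fun w => Relation.TransGen (E M rk step) w v) := by
    intro w hw
    simp only [Finset.mem_filter, Finset.mem_univ, true_and] at hw ⊢
    exact hw.tail h
  rw [Finset.ssubset_iff_of_subset hsub]
  refine ⟨u, ?_, ?_⟩
  · simp only [Finset.mem_filter, Finset.mem_univ, true_and]
    exact Relation.TransGen.single h
  · simp only [Finset.mem_filter, Finset.mem_univ, true_and]
    exact TGE_irrefl hrk hcov hM1 hM3 hstep hacyc u

lemma keyC_lt_rk {u u' : P} (h : rk u < rk u') :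
    keyC M rk step u < keyC M rk step u' := by
  unfold keyC
  have h1 : tcnt M rk step u + (Fintype.card P + 1) * rk u <
      tcnt M rk step u' + (Fintype.card P + 1) * rk u' :=
    digit_lt (Nat.lt_succ_of_le (tcnt_le M rk step u)) h
  exact digit_lt (Nat.lt_succ_of_lt (idx_lt u)) h1

lemma keyC_lt_t {u u' : P} (h : rk u = rk u') (ht : tcnt M rk step u < tcnt M rk step u') :
    keyC M rk step u < keyC M rk step u' := by
  unfold keyC
  have h1 : tcnt M rk step u + (Fintype.card P + 1) * rk u <
      tcnt M rk step u' + (Fintype.card P + 1) * rk u' := by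
    rw [h]
    omega
  exact digit_lt (Nat.lt_succ_of_lt (idx_lt u)) h1

lemma keyC_inj {u u' : P} (h : keyC M rk step u = keyC M rk step u') : u = u' := by
  unfold keyC at h
  have := digit_inj (Nat.lt_succ_of_lt (idx_lt u)) (Nat.lt_succ_of_lt (idx_lt u')) h
  exact idx_inj this.1

lemma step_keyC (hrk : ∀ a b : P, a ⋖ b → rk b = rk a + 1)
    (hcov : ∀ p ∈ M, p.1 ⋖ p.2)
    (hM1 : ∀ a b b', (a, b) ∈ M → (a, b') ∈ M → b = b')
    (hM3 : ∀ a b c, (a, b) ∈ M → (b, c) ∈ M → False)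
    (hstep : ∀ x y, step x y ↔ ((y ⋖ x ∧ (y, x) ∉ M) ∨ (x ⋖ y ∧ (x, y) ∈ M)))
    (hacyc : ∀ x, ¬ Relation.TransGen step x x)
    {x y : P} (hs : step x y) (hne : c M x ≠ c M y) :
    keyC M rk step (c M y) < keyC M rk step (c M x) := by
  have hd := step_down hM1 hM3 hstep hs hne
  have hxy : rk x = rk y + 1 := hrk y x hd.1
  have hle : rk (c M y) ≤ rk (c M x) := by
    rcases rk_c hrk hcov x with h' | h' <;> rcases rk_c hrk hcov y with h'' | h''
    · rw [h', h'']; omega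
    · rw [h', h''.2]; omega
    · rw [h'.2, h'']; omega
    · rw [h'.2, h''.2]; omega
  rcases lt_or_eq_of_le hle with hlt | heq
  · exact keyC_lt_rk hlt
  · have hE : E M rk step (c M y) (c M x) := ⟨fun h => hne h.symm, heq, x, y, hs, rfl, rfl⟩
    exact keyC_lt_t heq (tcnt_lt hrk hcov hM1 hM3 hstep hacyc hE)

lemma off_lt (x : P) : off M x < 2 := by
  unfold off; split <;> omega

lemma key_lt_of_keyC {x y : P} (h : keyC M rk step (c M x) < keyC M rk step (c M y)) :
    key M rk step x < key M rk step y := by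
  unfold key
  exact digit_lt (off_lt x) h

lemma key_inj (hcov : ∀ p ∈ M, p.1 ⋖ p.2)
    (hM2 : ∀ a a' b, (a, b) ∈ M → (a', b) ∈ M → a = a')
    {x y : P} (h : key M rk step x = key M rk step y) : x = y := by
  unfold key at h
  obtain ⟨hoff, hkc⟩ := digit_inj (off_lt x) (off_lt y) h
  have hc : c M x = c M y := keyC_inj hkc
  by_cases h1 : c M x = x <;> by_cases h2 : c M y = y
  · rw [← h1, hc, h2]
  · exact absurd hoff (by unfold off; rw [if_pos h1, if_neg h2]; omega)
  · exact absurd hoff (by unfold off; rw [if_neg h1, if_pos h2]; omega)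
  · rcases c_spec M x with h' | h'
    · exact absurd h' h1
    · rcases c_spec M y with h'' | h''
      · exact absurd h'' h2
      · exact hM2 x y (c M x) h' (hc ▸ h'')

lemma key_pair (hcov : ∀ p ∈ M, p.1 ⋖ p.2)
    (hM1 : ∀ a b b', (a, b) ∈ M → (a, b') ∈ M → b = b')
    (hM3 : ∀ a b c, (a, b) ∈ M → (b, c) ∈ M → False)
    {a b : P} (hab : (a, b) ∈ M) :
    key M rk step b = key M rk step a + 1 := by
  have hca : c M a = b := c_eq_top hM1 hab
  have hcb : c M b = b := c_top hM3 hab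
  have hoa : off M a = 0 := by
    unfold off
    rw [if_neg]
    rw [hca]
    exact (hcov _ hab).ne'
  have hob : off M b = 1 := by unfold off; rw [if_pos hcb]
  unfold key
  rw [hca, hcb, hoa, hob]
  omega

end

end Stmt13

/-- Refined linear extension lemma for a graded poset: for an acyclic matching M on a
finite poset P with rank function rk, there is a linear extension of the order induced
by the modified Hasse diagram H_M (encoded by an injective f : P → ℕ increasing along
unmatched cover relations), in which matched pairs appear consecutively and which
refines the order by rank among matched pairs: if (a, b), (a', b') ∈ M and (a', b')
precedes (a, b), then rk b' ≤ rk b. -/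
theorem stmt_13 {P : Type*} [Fintype P] [PartialOrder P]
    (rk : P → ℕ) (hrk : ∀ a b : P, a ⋖ b → rk b = rk a + 1)
    (M : Set (P × P)) (hcov : ∀ p ∈ M, p.1 ⋖ p.2)
    (hM1 : ∀ a b b', (a, b) ∈ M → (a, b') ∈ M → b = b')
    (hM2 : ∀ a a' b, (a, b) ∈ M → (a', b) ∈ M → a = a')
    (hM3 : ∀ a b c, (a, b) ∈ M → (b, c) ∈ M → False)
    (step : P → P → Prop)
    (hstep : ∀ x y, step x y ↔ ((y ⋖ x ∧ (y, x) ∉ M) ∨ (x ⋖ y ∧ (x, y) ∈ M)))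
    (hacyc : ∀ x, ¬ Relation.TransGen step x x) :
    ∃ f : P → ℕ, Function.Injective f ∧
      (∀ a b : P, a ⋖ b → (a, b) ∉ M → f a < f b) ∧
      (∀ a b : P, (a, b) ∈ M → f b = f a + 1) ∧
      (∀ a b a' b' : P, (a, b) ∈ M → (a', b') ∈ M → f b' < f b → rk b' ≤ rk b) := by
  classical
  open Stmt13 in
  set K : P → ℕ := Stmt13.key M rk step with hK
  refine ⟨fun x => (Finset.univ.filter fun y => K y < K x).card, ?_, ?_, ?_, ?_⟩
  all_goals
    have keymono : ∀ x y : P, K x < K y →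
        (Finset.univ.filter fun z => K z < K x).card <
        (Finset.univ.filter fun z => K z < K y).card := by
      intro x y h
      apply Finset.card_lt_card
      have hsub : (Finset.univ.filter fun z => K z < K x) ⊆
          (Finset.univ.filter fun z => K z < K y) := by
        intro z hz
        simp only [Finset.mem_filter, Finset.mem_univ, true_and] at hz ⊢
        omega
      rw [Finset.ssubset_iff_of_subset hsub]
      exact ⟨x, by simp only [Finset.mem_filter, Finset.mem_univ, true_and]; omega,
        by simp only [Finset.mem_filter, Finset.mem_univ, true_and]; omega⟩
  · -- injectivity
    intro x y h
    dsimp only at h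
    rcases lt_trichotomy (K x) (K y) with hlt | heq | hgt
    · exact absurd h (by have := keymono x y hlt; omega)
    · exact Stmt13.key_inj hcov hM2 heq
    · exact absurd h (by have := keymono y x hgt; omega)
  · -- unmatched covers increase
    intro a b hab hnM
    apply keymono
    have hs : step b a := (hstep b a).2 (Or.inl ⟨hab, hnM⟩)
    have hne : Stmt13.c M b ≠ Stmt13.c M a := (Stmt13.c_ne hcov hM2 hab hnM).symm
    exact Stmt13.key_lt_of_keyC (Stmt13.step_keyC hrk hcov hM1 hM3 hstep hacyc hs hne)
  · -- matched pairs consecutive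
    intro a b hab
    have hk : K b = K a + 1 := Stmt13.key_pair hcov hM1 hM3 hab
    have hset : (Finset.univ.filter fun z => K z < K b) =
        insert a (Finset.univ.filter fun z => K z < K a) := by
      ext z
      simp only [Finset.mem_filter, Finset.mem_univ, true_and, Finset.mem_insert]
      constructor
      · intro hz
        rcases lt_trichotomy (K z) (K a) with h1 | h1 | h1
        · exact Or.inr h1
        · exact Or.inl (Stmt13.key_inj hcov hM2 h1)
        · omega
      · rintro (rfl | hz) <;> omega
    dsimp only
    rw [hset, Finset.card_insert_of_notMem (by
      simp only [Finset.mem_filter, Finset.mem_univ, true_and]; omega)]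
  · -- rank refinement among matched pairs
    intro a b a' b' hab hab' hlt
    dsimp only at hlt
    by_contra hcon
    push_neg at hcon
    have hkc : Stmt13.keyC M rk step (Stmt13.c M b) < Stmt13.keyC M rk step (Stmt13.c M b') := by
      rw [Stmt13.c_top hM3 hab, Stmt13.c_top hM3 hab']
      exact Stmt13.keyC_lt_rk hcon
    have := keymono b b' (Stmt13.key_lt_of_keyC hkc)
    omega
end

section
/- Let q = 2k be a positive even integer. In the free group F(x,y), the element y⁻²x^(−2k)yx^(2k) lies in the same normal closure as y⁻¹x^(−k) modulo the relator x⁻²y⁻¹xy; consequently the normal closure of {x⁻²y⁻¹xy, y⁻²x^(−2k)yx^(2k)} equals the normal closure of {x, yx^k} and hence equals all of F(x,y). -/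
lemma aux_conj_zpow {G : Type*} [Group G] {X Y : G}
    (hc : Y⁻¹ * X * Y = X * X) (n : ℤ) : Y⁻¹ * X ^ n * Y = X ^ (2 * n) := by
  have h1 : Y⁻¹ * X ^ n * Y = (Y⁻¹ * X * Y) ^ n := by
    have := conj_zpow (i := n) (a := Y⁻¹) (b := X)
    simpa using this.symm
  rw [h1, hc, ← zpow_two, ← zpow_mul]

lemma aux_triv1 {G : Type*} [Group G] (X Y : G) (k : ℕ)
    (h1 : X⁻¹ * X⁻¹ * Y⁻¹ * X * Y = 1)
    (h2 : Y⁻¹ * Y⁻¹ * X ^ (-(2 * (k : ℤ))) * Y * X ^ (2 * (k : ℤ)) = 1) :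
    X = 1 ∧ Y = 1 := by
  have hc : Y⁻¹ * X * Y = X * X := by
    rw [show X⁻¹ * X⁻¹ * Y⁻¹ * X * Y = (X * X)⁻¹ * (Y⁻¹ * X * Y) by group,
      inv_mul_eq_one] at h1
    exact h1.symm
  have hY : Y = X ^ (-(2 * (k : ℤ))) := by
    rw [show Y⁻¹ * Y⁻¹ * X ^ (-(2 * (k : ℤ))) * Y * X ^ (2 * (k : ℤ))
        = Y⁻¹ * (Y⁻¹ * X ^ (-(2 * (k : ℤ))) * Y) * X ^ (2 * (k : ℤ)) by group] at h2
    rw [aux_conj_zpow hc] at h2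
    rw [show Y⁻¹ * X ^ (2 * -(2 * (k : ℤ))) * X ^ (2 * (k : ℤ))
        = Y⁻¹ * X ^ (-(2 * (k : ℤ))) by rw [mul_assoc, ← zpow_add]; ring_nf,
      inv_mul_eq_one] at h2
    exact h2
  have hX : X = 1 := by
    have : Y⁻¹ * X * Y = X := by
      rw [hY]; rw [← zpow_neg]
      rw [show X ^ (- -(2 * (k:ℤ))) * X * X ^ (-(2 * (k : ℤ)))
          = X ^ ((- -(2 * (k:ℤ))) + 1 + (-(2 * (k:ℤ)))) by
        rw [zpow_add, zpow_add, zpow_one]]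
      norm_num
    rw [hc] at this
    exact (left_eq_mul.mp this.symm)
  refine ⟨hX, ?_⟩
  rw [hY, hX, one_zpow]

lemma aux_triv2 {G : Type*} [Group G] (X Y : G) (k : ℕ)
    (h1 : X⁻¹ * X⁻¹ * Y⁻¹ * X * Y = 1)
    (h2 : Y⁻¹ * X ^ (-(k : ℤ)) = 1) :
    X = 1 ∧ Y = 1 := by
  have hc : Y⁻¹ * X * Y = X * X := by
    rw [show X⁻¹ * X⁻¹ * Y⁻¹ * X * Y = (X * X)⁻¹ * (Y⁻¹ * X * Y) by group,
      inv_mul_eq_one] at h1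
    exact h1.symm
  have hY : Y = X ^ (-(k : ℤ)) := by
    rw [inv_mul_eq_one] at h2; exact h2
  have hX : X = 1 := by
    have : Y⁻¹ * X * Y = X := by
      rw [hY, ← zpow_neg]
      rw [show X ^ (-(-(k:ℤ))) * X * X ^ (-(k : ℤ))
          = X ^ ((-(-(k:ℤ))) + 1 + (-(k:ℤ))) by rw [zpow_add, zpow_add, zpow_one]]
      norm_num
    rw [hc] at this
    exact (left_eq_mul.mp this.symm)
  refine ⟨hX, ?_⟩
  rw [hY, hX, one_zpow]

section main
open FreeGroup Subgroup

/-- For a normal subgroup in whose quotient both generators die, each generator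
and every word in them lies in the subgroup. -/
lemma aux_gen {N : Subgroup (FreeGroup Bool)} [N.Normal] {g : FreeGroup Bool}
    (hX : ((FreeGroup.of true : FreeGroup Bool) : FreeGroup Bool ⧸ N) = 1)
    (hY : ((FreeGroup.of false : FreeGroup Bool) : FreeGroup Bool ⧸ N) = 1) :
    g ∈ N := by
  have : Subgroup.closure (Set.range (FreeGroup.of : Bool → FreeGroup Bool)) ≤ N := by
    rw [Subgroup.closure_le]
    rintro _ ⟨b, rfl⟩
    cases b
    · exact (QuotientGroup.eq_one_iff _).mp hY
    · exact (QuotientGroup.eq_one_iff _).mp hX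
  rw [FreeGroup.closure_range_of] at this
  exact this (Subgroup.mem_top g)


lemma aux_q {S : Set (FreeGroup Bool)} {a : FreeGroup Bool}
    (ha : a ∈ S) :
    ((a : FreeGroup Bool) : FreeGroup Bool ⧸ Subgroup.normalClosure S) = 1 :=
  (QuotientGroup.eq_one_iff _).mpr (Subgroup.subset_normalClosure ha)

/-- The even case of Gordon's presentations G_q, q = 2k: in F(x, y) (with x = of true,
y = of false), modulo the relator x⁻²y⁻¹xy, the relator y⁻²x^(−2k)yx^(2k) is
equivalent to y⁻¹x^(−k); consequently the normal closure of the two relators equals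
the normal closure of {x, yxᵏ}, and hence is all of F(x, y). -/
theorem stmt_15 (k : ℕ) (hk : 0 < k) :
    Subgroup.normalClosure
        ({(FreeGroup.of true)⁻¹ * (FreeGroup.of true)⁻¹ * (FreeGroup.of false)⁻¹ *
            FreeGroup.of true * FreeGroup.of false,
          (FreeGroup.of false)⁻¹ * (FreeGroup.of false)⁻¹ *
            FreeGroup.of true ^ (-(2 * (k : ℤ))) * FreeGroup.of false *
            FreeGroup.of true ^ (2 * (k : ℤ))} : Set (FreeGroup Bool)) =
      Subgroup.normalClosure
        {(FreeGroup.of true)⁻¹ * (FreeGroup.of true)⁻¹ * (FreeGroup.of false)⁻¹ *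
            FreeGroup.of true * FreeGroup.of false,
          (FreeGroup.of false)⁻¹ * FreeGroup.of true ^ (-(k : ℤ))} ∧
    Subgroup.normalClosure
        ({(FreeGroup.of true)⁻¹ * (FreeGroup.of true)⁻¹ * (FreeGroup.of false)⁻¹ *
            FreeGroup.of true * FreeGroup.of false,
          (FreeGroup.of false)⁻¹ * (FreeGroup.of false)⁻¹ *
            FreeGroup.of true ^ (-(2 * (k : ℤ))) * FreeGroup.of false *
            FreeGroup.of true ^ (2 * (k : ℤ))} : Set (FreeGroup Bool)) =
      Subgroup.normalClosure
        {FreeGroup.of true, FreeGroup.of false * FreeGroup.of true ^ (k : ℤ)} ∧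
    Subgroup.normalClosure
        ({(FreeGroup.of true)⁻¹ * (FreeGroup.of true)⁻¹ * (FreeGroup.of false)⁻¹ *
            FreeGroup.of true * FreeGroup.of false,
          (FreeGroup.of false)⁻¹ * (FreeGroup.of false)⁻¹ *
            FreeGroup.of true ^ (-(2 * (k : ℤ))) * FreeGroup.of false *
            FreeGroup.of true ^ (2 * (k : ℤ))} : Set (FreeGroup Bool)) =
      (⊤ : Subgroup (FreeGroup Bool)) := by
  set x : FreeGroup Bool := FreeGroup.of true with hxdef
  set y : FreeGroup Bool := FreeGroup.of false with hydef
  set r1 : FreeGroup Bool := x⁻¹ * x⁻¹ * y⁻¹ * x * y with hr1def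
  set r2 : FreeGroup Bool := y⁻¹ * y⁻¹ * x ^ (-(2 * (k : ℤ))) * y * x ^ (2 * (k : ℤ))
    with hr2def
  set s : FreeGroup Bool := y⁻¹ * x ^ (-(k : ℤ)) with hsdef
  set S1 : Set (FreeGroup Bool) := {r1, r2} with hS1def
  set S2 : Set (FreeGroup Bool) := {r1, s} with hS2def
  set S3 : Set (FreeGroup Bool) := {x, y * x ^ (k : ℤ)} with hS3def
  -- the generators vanish in the quotient by ⟪S1⟫
  have e11 := aux_q (S := S1) (a := r1) (Set.mem_insert _ _)
  have e12 := aux_q (S := S1) (a := r2) (Set.mem_insert_iff.mpr (Or.inr rfl))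
  rw [hr1def] at e11
  rw [hr2def] at e12
  simp only [QuotientGroup.mk_mul, QuotientGroup.mk_inv, QuotientGroup.mk_zpow] at e11 e12
  obtain ⟨hX1, hY1⟩ := aux_triv1 _ _ k e11 e12
  -- the generators vanish in the quotient by ⟪S2⟫
  have e21 := aux_q (S := S2) (a := r1) (Set.mem_insert _ _)
  have e22 := aux_q (S := S2) (a := s) (Set.mem_insert_iff.mpr (Or.inr rfl))
  rw [hr1def] at e21
  rw [hsdef] at e22
  simp only [QuotientGroup.mk_mul, QuotientGroup.mk_inv, QuotientGroup.mk_zpow] at e21 e22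
  obtain ⟨hX2, hY2⟩ := aux_triv2 _ _ k e21 e22
  -- the generators vanish in the quotient by ⟪S3⟫
  have e31 := aux_q (S := S3) (a := x) (Set.mem_insert _ _)
  have e32 := aux_q (S := S3) (a := y * x ^ (k : ℤ))
    (Set.mem_insert_iff.mpr (Or.inr rfl))
  simp only [QuotientGroup.mk_mul, QuotientGroup.mk_inv, QuotientGroup.mk_zpow] at e31 e32
  have e33 : ((y : FreeGroup Bool) : FreeGroup Bool ⧸ Subgroup.normalClosure S3) = 1 := by
    rw [e31, one_zpow, mul_one] at e32
    exact e32
  -- membership helper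
  have mem1 : ∀ g : FreeGroup Bool, g ∈ Subgroup.normalClosure S1 := fun g =>
    aux_gen (g := g) hX1 hY1
  have mem2 : ∀ g : FreeGroup Bool, g ∈ Subgroup.normalClosure S2 := fun g =>
    aux_gen (g := g) hX2 hY2
  have mem3 : ∀ g : FreeGroup Bool, g ∈ Subgroup.normalClosure S3 := fun g =>
    aux_gen (g := g) e31 e33
  have htop : ∀ T : Set (FreeGroup Bool),
      (∀ g : FreeGroup Bool, g ∈ Subgroup.normalClosure T) →
      Subgroup.normalClosure T = ⊤ := by
    intro T hT
    exact top_unique fun g _ => hT g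
  have h1 : Subgroup.normalClosure S1 = ⊤ := htop S1 mem1
  have h2 : Subgroup.normalClosure S2 = ⊤ := htop S2 mem2
  have h3 : Subgroup.normalClosure S3 = ⊤ := htop S3 mem3
  exact ⟨h1.trans h2.symm, h1.trans h3.symm, h1⟩
end main
end

section
/- The group presented by ⟨x, y | x⁻²y⁻¹xy, y⁻¹x⁻¹yx⁻¹y⁻¹⟩ is the trivial group. -/
/-- The group presented by ⟨x, y | x⁻²y⁻¹xy, y⁻¹x⁻¹yx⁻¹y⁻¹⟩ is the trivial group. -/
theorem stmt_16 :
    Subsingleton (PresentedGroup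
      ({(FreeGroup.of true)⁻¹ * (FreeGroup.of true)⁻¹ * (FreeGroup.of false)⁻¹ *
          FreeGroup.of true * FreeGroup.of false,
        (FreeGroup.of false)⁻¹ * (FreeGroup.of true)⁻¹ * FreeGroup.of false *
          (FreeGroup.of true)⁻¹ * (FreeGroup.of false)⁻¹} :
        Set (FreeGroup Bool))) := by
  set rels : Set (FreeGroup Bool) :=
    ({(FreeGroup.of true)⁻¹ * (FreeGroup.of true)⁻¹ * (FreeGroup.of false)⁻¹ *
          FreeGroup.of true * FreeGroup.of false,
        (FreeGroup.of false)⁻¹ * (FreeGroup.of true)⁻¹ * FreeGroup.of false *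
          (FreeGroup.of true)⁻¹ * (FreeGroup.of false)⁻¹} : Set (FreeGroup Bool)) with hrels
  set x : PresentedGroup rels := PresentedGroup.of true with hx
  set y : PresentedGroup rels := PresentedGroup.of false with hy
  have hone : ∀ r ∈ rels, (QuotientGroup.mk r : PresentedGroup rels) = 1 := by
    intro r hr
    rw [QuotientGroup.eq_one_iff]
    exact Subgroup.subset_normalClosure hr
  have h1 : x⁻¹ * x⁻¹ * y⁻¹ * x * y = 1 := by
    have := hone _ (Set.mem_insert _ _)
    simp at this; exact this
  have h2 : y⁻¹ * x⁻¹ * y * x⁻¹ * y⁻¹ = 1 := by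
    have := hone _ (Set.mem_insert_of_mem _ rfl)
    simp at this; exact this
  have h3 : x⁻¹ * x⁻¹ * x⁻¹ * y⁻¹ = 1 := by
    have := congrArg₂ (· * ·) h1 h2
    simp only [one_mul] at this
    calc x⁻¹ * x⁻¹ * x⁻¹ * y⁻¹
        = (x⁻¹ * x⁻¹ * y⁻¹ * x * y) * (y⁻¹ * x⁻¹ * y * x⁻¹ * y⁻¹) := by group
      _ = 1 := by rw [h1, h2, one_mul]
  have hyx : y = x⁻¹ * x⁻¹ * x⁻¹ := by
    have := mul_eq_one_iff_inv_eq.mp h3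
    have := inv_injective this.symm
    rw [this]
  have hx1 : x = 1 := by
    rw [hyx] at h1
    have : x⁻¹ = 1 := by
      calc x⁻¹ = x⁻¹ * x⁻¹ * (x⁻¹ * x⁻¹ * x⁻¹)⁻¹ * x * (x⁻¹ * x⁻¹ * x⁻¹) := by group
        _ = 1 := h1
    simpa using congrArg (·⁻¹) this
  have hy1 : y = 1 := by rw [hyx, hx1]; group
  constructor
  intro a b
  have key : ∀ c : PresentedGroup rels, c = 1 := by
    intro c
    obtain ⟨f, rfl⟩ := QuotientGroup.mk_surjective c
    have : (QuotientGroup.mk' (Subgroup.normalClosure rels) : FreeGroup Bool →* PresentedGroup rels)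
        = 1 := by
      apply FreeGroup.ext_hom
      intro b
      cases b
      · exact hy1
      · exact hx1
    exact DFunLike.congr_fun this f
  rw [key a, key b]
end

section
/- For every k ≥ 1, the group presented by 𝒢̃_k = ⟨x, y | x⁻²y⁻¹xy, y⁻¹x^(−k+1)yx⁻¹y⁻¹⟩ is the trivial group. -/
lemma key_aux {G : Type*} [Group G] (x y : G) (k : ℕ)
    (h1 : x⁻¹ * x⁻¹ * y⁻¹ * x * y = 1)
    (h2 : y⁻¹ * x ^ ((1:ℤ) - (k:ℤ)) * y * x⁻¹ * y⁻¹ = 1) : x = 1 ∧ y = 1 := by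
  have hc : y⁻¹ * x * y = x * x := by
    calc y⁻¹*x*y = (x*x)*(x⁻¹*x⁻¹*y⁻¹*x*y) := by group
    _ = x*x := by rw [h1, mul_one]
  have hcn : ∀ n : ℤ, y⁻¹ * x^n * y = (x*x)^n := fun n => by
    have := @conj_zpow _ _ n y⁻¹ x
    rw [inv_inv] at this
    rw [← this, hc]
  have h2' : y⁻¹ * x^((1:ℤ)-(k:ℤ)) * y = y * x := by
    calc y⁻¹*x^((1:ℤ)-(k:ℤ))*y
        = (y⁻¹*x^((1:ℤ)-(k:ℤ))*y*x⁻¹*y⁻¹) * (y*x) := by group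
    _ = y*x := by rw [h2, one_mul]
  have hyx : (x*x)^((1:ℤ)-(k:ℤ)) = y * x := (hcn _).symm.trans h2'
  have hy : y = x ^ (2*((1:ℤ)-(k:ℤ)) - 1) := by
    have hyy : y = (x*x)^((1:ℤ)-(k:ℤ)) * x⁻¹ := by rw [hyx]; group
    have h2x : x * x = x ^ (2:ℤ) := (zpow_two x).symm
    rw [hyy, h2x, ← zpow_mul]
    group
  have hx : x = 1 := by
    have h := h1
    rw [hy] at h
    have hinv : x⁻¹ = 1 := by rw [← h]; group
    exact inv_eq_one.mp hinv
  refine ⟨hx, ?_⟩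
  rw [hy, hx]; group


/-- For every k ≥ 1, the presentation 𝒢̃ₖ = ⟨x, y | x⁻²y⁻¹xy, y⁻¹x^(−k+1)yx⁻¹y⁻¹⟩
presents the trivial group. -/
theorem stmt_17 (k : ℕ) (hk : 1 ≤ k) :
    Subsingleton (PresentedGroup
      ({(FreeGroup.of true)⁻¹ * (FreeGroup.of true)⁻¹ * (FreeGroup.of false)⁻¹ *
          FreeGroup.of true * FreeGroup.of false,
        (FreeGroup.of false)⁻¹ * FreeGroup.of true ^ ((1 : ℤ) - (k : ℤ)) *
          FreeGroup.of false * (FreeGroup.of true)⁻¹ * (FreeGroup.of false)⁻¹} :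
        Set (FreeGroup Bool))) := by
  set rels : Set (FreeGroup Bool) :=
    ({(FreeGroup.of true)⁻¹ * (FreeGroup.of true)⁻¹ * (FreeGroup.of false)⁻¹ *
          FreeGroup.of true * FreeGroup.of false,
        (FreeGroup.of false)⁻¹ * FreeGroup.of true ^ ((1 : ℤ) - (k : ℤ)) *
          FreeGroup.of false * (FreeGroup.of true)⁻¹ * (FreeGroup.of false)⁻¹} :
        Set (FreeGroup Bool)) with hrels
  let N := Subgroup.normalClosure rels
  let f : FreeGroup Bool →* PresentedGroup rels := QuotientGroup.mk' N
  have hmk : ∀ r ∈ rels, f r = 1 := by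
    intro r hr
    show (QuotientGroup.mk r : PresentedGroup rels) = 1
    rw [QuotientGroup.eq_one_iff]
    exact Subgroup.subset_normalClosure hr
  set x : PresentedGroup rels := PresentedGroup.of true with hxdef
  set y : PresentedGroup rels := PresentedGroup.of false with hydef
  have hfx : f (FreeGroup.of true) = x := rfl
  have hfy : f (FreeGroup.of false) = y := rfl
  have h1 : x⁻¹ * x⁻¹ * y⁻¹ * x * y = 1 := by
    have := hmk _ (Set.mem_insert _ _)
    simpa [map_mul, map_inv, hfx, hfy] using this
  have h2 : y⁻¹ * x ^ ((1:ℤ) - (k:ℤ)) * y * x⁻¹ * y⁻¹ = 1 := by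
    have := hmk _ (Set.mem_insert_of_mem _ rfl)
    simpa [map_mul, map_inv, map_zpow, hfx, hfy] using this
  obtain ⟨hx1, hy1⟩ := key_aux x y k h1 h2
  have hone : ∀ b : Bool, f (FreeGroup.of b) = 1 := by
    intro b; cases b
    · rw [hfy, hy1]
    · rw [hfx, hx1]
  have hf : f = 1 := FreeGroup.ext_hom _ _ (fun b => by rw [hone b]; rfl)
  constructor
  intro a b
  obtain ⟨wa, rfl⟩ := QuotientGroup.mk'_surjective N a
  obtain ⟨wb, rfl⟩ := QuotientGroup.mk'_surjective N b
  show f wa = f wb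
  rw [hf]; rfl
end
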